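/- Let A ∈ B(E,F) have generalized inverse A⁺ and let T ∈ B(E,F) with ‖T − A‖ < ‖A⁺‖⁻¹. Then R(T) ∩ N(A⁺) = {0} if and only if E = N(T) ⊕ R(A⁺). -/

import Mathlib

theorem stmt_4 {E F : Type*} [NormedAddCommGroup E] [NormedSpace ℝ E] [CompleteSpace E]
    [NormedAddCommGroup F] [NormedSpace ℝ F] [CompleteSpace F]
    (A T : E →L[ℝ] F) (Ap : F →L[ℝ] E)
    (h1 : A ∘L Ap ∘L A = A) (h2 : Ap ∘L A ∘L Ap = Ap)
    (hT : ‖T - A‖ < ‖Ap‖⁻¹) :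
    LinearMap.range (T : E →ₗ[ℝ] F) ⊓ LinearMap.ker (Ap : F →ₗ[ℝ] E) = ⊥ ↔
      IsCompl (LinearMap.ker (T : E →ₗ[ℝ] F)) (LinearMap.range (Ap : F →ₗ[ℝ] E)) := by
  classical
  -- Ap ≠ 0
  have hApn : ‖Ap‖ ≠ 0 := by
    intro h0
    rw [h0, inv_zero] at hT
    exact absurd hT (not_lt.2 (norm_nonneg _))
  have hApos : (0:ℝ) < ‖Ap‖ := lt_of_le_of_ne (norm_nonneg _) (Ne.symm hApn)
  -- pointwise version of h2
  have hPA : ∀ w : F, Ap (A (Ap w)) = Ap w := by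
    intro w
    have := congrArg (fun f : F →L[ℝ] E => f w) h2
    simpa using this
  -- the perturbation c and invertible u = 1 + c
  set c : E →L[ℝ] E := Ap ∘L (T - A) with hcdef
  have hclt : ‖c‖ < 1 := by
    calc ‖c‖ ≤ ‖Ap‖ * ‖T - A‖ := ContinuousLinearMap.opNorm_comp_le _ _
      _ < ‖Ap‖ * ‖Ap‖⁻¹ := by exact mul_lt_mul_of_pos_left hT hApos
      _ = 1 := mul_inv_cancel₀ hApn
  set u : (E →L[ℝ] E)ˣ := Units.oneSub (-c) (by rwa [norm_neg]) with hudef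
  set U : E →L[ℝ] E := (u : E →L[ℝ] E) with hUdef
  have hu : ∀ x : E, U x = x + Ap (T x) - Ap (A x) := by
    intro x
    have hval : U = 1 - (-c) := rfl
    rw [hval]
    simp [hcdef, map_sub]
    abel
  set v : E →L[ℝ] E := ((u⁻¹ : (E →L[ℝ] E)ˣ) : E →L[ℝ] E) with hvdef
  have hvu : ∀ x : E, v (U x) = x := by
    intro x
    show ((↑u⁻¹ : E →L[ℝ] E) * ↑u) x = x
    rw [u.inv_mul]
    rfl
  have huv : ∀ x : E, U (v x) = x := by
    intro x
    show ((↑u : E →L[ℝ] E) * ↑u⁻¹) x = x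
    rw [u.mul_inv]
    rfl
  -- v preserves the range of Ap
  have hvAp : ∀ w : F, ∃ w' : F, v (Ap w) = Ap w' := by
    intro w
    have h : U (v (Ap w)) = Ap w := huv (Ap w)
    rw [hu] at h
    refine ⟨w - T (v (Ap w)) + A (v (Ap w)), ?_⟩
    set a : E := v (Ap w) with hadef
    rw [map_add, map_sub, ← h]
    abel
  -- Key lemma 1: ker (Ap ∘ T) ∩ range Ap = 0
  have L1 : ∀ x : E, Ap (T x) = 0 → (∃ w, Ap w = x) → x = 0 := by
    rintro x hx ⟨w, hw⟩
    have hux : U x = 0 := by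
      rw [hu, hx, ← hw, hPA]
      abel
    have h := hvu x
    rw [hux, map_zero] at h
    exact h.symm
  -- Key lemma 2: every x splits as k + (range Ap elt) with Ap (T k) = 0
  have L3 : ∀ x : E, ∃ k : E, ∃ w : F, Ap (T k) = 0 ∧ x = k + Ap w := by
    intro x
    obtain ⟨w', hw'⟩ := hvAp (A (U x))
    set m : E := v (Ap (A (U x))) with hmdef
    set k : E := x - m with hkdef
    have hum : U m = Ap (A (U x)) := huv _
    -- d := U x - k lies in range Ap
    have hd : U x - k = Ap (T x - A x + w') := by
      rw [hkdef, hu x, map_add, map_sub, ← hw']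
      abel
    have hTk : Ap (T k) = (U x - k) - Ap (A (U x - k)) := by
      have hA1 : Ap (T k) = U k - k + Ap (A k) := by rw [hu]; abel
      have hA2 : U k = U x - Ap (A (U x)) := by
        rw [hkdef, map_sub, hum]
      rw [hA1, hA2]
      simp only [map_sub]
      abel
    rw [hd, hPA] at hTk
    exact ⟨k, w', by rw [hTk]; abel, by rw [← hw']; rw [hkdef]; abel⟩
  -- Now the equivalence
  constructor
  · intro h
    constructor
    · -- disjointness: ker T ∩ range Ap = 0 (holds unconditionally)
      rw [Submodule.disjoint_def]
      intro x hx1 hx2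
      have hx1' : T x = 0 := hx1
      obtain ⟨w, hw⟩ := hx2
      exact L1 x (by rw [hx1', map_zero]) ⟨w, hw⟩
    · -- codisjointness
      rw [codisjoint_iff]
      rw [Submodule.eq_top_iff']
      intro x
      obtain ⟨k, w, hk, hxkw⟩ := L3 x
      have hTk : T k = 0 := by
        have hmem : T k ∈ LinearMap.range (T : E →ₗ[ℝ] F) ⊓ LinearMap.ker (Ap : F →ₗ[ℝ] E) :=
          ⟨⟨k, rfl⟩, hk⟩
        rw [h] at hmem
        simpa using hmem
      exact Submodule.mem_sup.2 ⟨k, hTk, Ap w, ⟨w, rfl⟩, hxkw.symm⟩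
  · intro hcompl
    rw [eq_bot_iff]
    rintro y ⟨hy1, hy2⟩
    obtain ⟨x, hx⟩ := hy1
    have hy2' : Ap y = 0 := hy2
    have hxmem : x ∈ LinearMap.ker (T : E →ₗ[ℝ] F) ⊔ LinearMap.range (Ap : F →ₗ[ℝ] E) := by
      rw [hcompl.sup_eq_top]; trivial
    obtain ⟨k, hk, r, hr, hkr⟩ := Submodule.mem_sup.1 hxmem
    have hk' : T k = 0 := hk
    obtain ⟨w, hw⟩ := hr
    have hApTr : Ap (T r) = 0 := by
      have : T r = y := by
        rw [← hx, ← hkr, map_add, ContinuousLinearMap.coe_coe, hk', zero_add]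
      rw [this, hy2']
    have hr0 : r = 0 := L1 r hApTr ⟨w, hw⟩
    have : y = 0 := by
      rw [← hx, ← hkr, hr0, add_zero, ContinuousLinearMap.coe_coe, hk']
    simp [this]
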